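/- Let N ≥ 1 and n ≥ 1 be integers and let d be an integer. If there exist polynomials P, Q ∈ ℤ[X] such that d·X^n = P(X)·X^{n+1} + Q(X)·((1+X)^N − 1) in ℤ[X], then N divides d. Equivalently: if d·X^n lies in the ideal of ℤ[X] generated by X^{n+1} and (1+X)^N − 1, then N divides d. -/
import Mathlib


open Polynomial Finset

/-- If `d·Xⁿ` lies in the ideal of `ℤ[X]` generated by `X^(n+1)` and `(1+X)^N - 1`
(with `N, n ≥ 1`), then `N` divides `d`. -/
theorem stmt_7 (N n : ℕ) (hN : 1 ≤ N) (hn : 1 ≤ n) (d : ℤ)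
    (h : ∃ P Q : Polynomial ℤ,
      C d * X ^ n = P * X ^ (n + 1) + Q * ((1 + X) ^ N - 1)) :
    (N : ℤ) ∣ d := by
  obtain ⟨P, Q, h⟩ := h
  set c : ℕ → ℤ := fun j => (N.choose j : ℤ) - if j = 0 then 1 else 0 with hc
  have hc0 : c 0 = 0 := by simp [hc]
  have hc1 : c 1 = N := by simp [hc]
  have key : ∀ m : ℕ, m ≤ n →
      (if m = n then d else 0) = ∑ k ∈ range (m + 1), Q.coeff k * c (m - k) := by
    intro m hm
    have h2 := congrArg (fun p => p.coeff m) h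
    simp only [coeff_add] at h2
    have hL : (C d * X ^ n).coeff m = if m = n then d else 0 := by
      rw [coeff_C_mul, coeff_X_pow]; split <;> ring
    have hP : (P * X ^ (n + 1)).coeff m = 0 := by
      rw [coeff_mul_X_pow', if_neg (by omega)]
    have hQ : (Q * ((1 + X) ^ N - 1)).coeff m
        = ∑ k ∈ range (m + 1), Q.coeff k * c (m - k) := by
      rw [coeff_mul, Finset.Nat.sum_antidiagonal_eq_sum_range_succ_mk]
      refine Finset.sum_congr rfl fun k hk => ?_
      simp [hc, coeff_sub, coeff_one, coeff_one_add_X_pow]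
    rw [hL, hP, hQ, zero_add] at h2
    exact h2
  have hNne : (N : ℤ) ≠ 0 := Int.natCast_ne_zero.mpr (by omega)
  have hz : ∀ m : ℕ, m + 1 < n → Q.coeff m = 0 := by
    intro m
    induction m using Nat.strong_induction_on with
    | _ m ih =>
      intro hm
      have hk := key (m + 1) (by omega)
      rw [if_neg (by omega)] at hk
      have hs := Finset.sum_eq_single_of_mem (s := range (m + 1 + 1))
        (f := fun k => Q.coeff k * c (m + 1 - k)) m (Finset.mem_range.mpr (by omega)) ?_
      · rw [hs] at hk
        simp only [Nat.add_sub_cancel_left, hc1] at hk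
        rcases mul_eq_zero.mp hk.symm with h' | h'
        · exact h'
        · exact absurd h' hNne
      · intro b hb hbm
        simp only [Finset.mem_range] at hb
        show Q.coeff b * c (m + 1 - b) = 0
        rcases lt_or_ge b m with hb' | hb'
        · rw [ih b hb' (by omega), zero_mul]
        · have : b = m + 1 := by omega
          subst this
          simp [hc0]
  have hk := key n le_rfl
  rw [if_pos rfl] at hk
  have hsub : n - (n - 1) = 1 := by omega
  have hs := Finset.sum_eq_single_of_mem (s := range (n + 1))
    (f := fun k => Q.coeff k * c (n - k)) (n - 1) (Finset.mem_range.mpr (by omega)) ?_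
  · rw [hs] at hk
    simp only [hsub, hc1] at hk
    exact ⟨Q.coeff (n - 1), by linarith⟩
  · intro b hb hbm
    simp only [Finset.mem_range] at hb
    show Q.coeff b * c (n - b) = 0
    rcases lt_or_ge b (n - 1) with hb' | hb'
    · rw [hz b (by omega), zero_mul]
    · have : b = n := by omega
      subst this
      simp [hc0]
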